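/- Let (Q_t)_{t≥0} be a Feller convolution semigroup on the space (F,𝓕) of measurable self-maps of a compact metric space M. Define for each n ≥ 1, f ∈ C(Mⁿ), x ∈ Mⁿ: P_t^{(n)} f(x) = ∫ f(φ(x₁),…,φ(xₙ)) Q_t(dφ). Then (P_t^{(n)})_{n≥1} is a compatible family of Feller semigroups on the spaces Mⁿ, and it satisfies P_t^{(2)}(f⊗f)(x,x) = P_t^{(1)}(f²)(x) for all f ∈ C(M), x ∈ M, t ≥ 0. -/

import Mathlib

open MeasureTheory Filter Topology
open scoped NNReal

/-- The space of measurable self-maps of a compact metric space. -/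
def FF (M : Type*) [MeasurableSpace M] : Type _ := {φ : M → M // Measurable φ}

/-- The σ-field on `FF M` generated by the evaluation maps `φ ↦ φ(x)`. -/
instance FF.instMeasurableSpace (M : Type*) [MeasurableSpace M] : MeasurableSpace (FF M) :=
  ⨆ x : M, MeasurableSpace.comap (fun φ : FF M => φ.1 x) inferInstance

/-- Composition in `FF M`. -/
def FF.comp {M : Type*} [MeasurableSpace M] (φ ψ : FF M) : FF M :=
  ⟨φ.1 ∘ ψ.1, φ.2.comp ψ.2⟩

/-- The `n`-point operators associated with a family of measures on `FF M`:
`Pn Q n t f x = ∫ f(φ(x₁),…,φ(xₙ)) Q_t(dφ)`. -/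
noncomputable def Pn {M : Type*} [MeasurableSpace M] (Q : ℝ≥0 → Measure (FF M))
    (n : ℕ) (t : ℝ≥0) (f : (Fin n → M) → ℝ) (x : Fin n → M) : ℝ :=
  ∫ φ : FF M, f (fun i => φ.1 (x i)) ∂ Q t

section Aux
variable {M : Type*} [MeasurableSpace M]

lemma FF.measurable_eval (x : M) : Measurable fun φ : FF M => φ.1 x :=
  measurable_iff_comap_le.2 (le_iSup (fun x : M => MeasurableSpace.comap (fun φ : FF M => φ.1 x) inferInstance) x)

lemma measurable_toFF {α : Type*} [MeasurableSpace α] {g : α → FF M}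
    (h : ∀ x, Measurable fun a => (g a).1 x) : Measurable g := by
  rw [measurable_iff_comap_le]
  show MeasurableSpace.comap g (⨆ x : M, MeasurableSpace.comap (fun φ : FF M => φ.1 x) inferInstance) ≤ _
  rw [MeasurableSpace.comap_iSup]
  refine iSup_le fun x => ?_
  rw [MeasurableSpace.comap_comp]
  exact measurable_iff_comap_le.1 (h x)

lemma exists_bound {X : Type*} [TopologicalSpace X] [CompactSpace X] {h : X → ℝ}
    (hh : Continuous h) : ∃ C, 0 ≤ C ∧ ∀ z, |h z| ≤ C := by
  refine ⟨‖BoundedContinuousFunction.mkOfCompact ⟨h, hh⟩‖, norm_nonneg _, fun z => ?_⟩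
  exact (BoundedContinuousFunction.mkOfCompact ⟨h, hh⟩).norm_coe_le_norm z

lemma integrable_comp {α X : Type*} [MeasurableSpace α] [TopologicalSpace X] [CompactSpace X]
    [MeasurableSpace X] [OpensMeasurableSpace X]
    {μ : Measure α} [IsProbabilityMeasure μ] {h : X → ℝ} (hh : Continuous h)
    {A : α → X} (hA : Measurable A) : Integrable (fun φ => h (A φ)) μ := by
  obtain ⟨C, _, hC⟩ := exists_bound hh
  exact (integrable_const C).mono' (hh.measurable.comp hA).aestronglyMeasurable
    (Filter.Eventually.of_forall fun φ => by simpa using hC (A φ))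

end Aux


section Est
variable {M : Type*} [MetricSpace M] [CompactSpace M] [MeasurableSpace M] [BorelSpace M]

lemma est {α : Type*} [MeasurableSpace α] (μ : Measure α) [IsProbabilityMeasure μ] {n : ℕ}
    {f : (Fin n → M) → ℝ} (hf : Continuous f) {ι : Type*} (s : Finset ι) (g : ι → M → ℝ)
    (hg : ∀ z, Continuous (g z)) {ε K : ℝ} (hK : 0 ≤ K)
    (hdom : ∀ a b : Fin n → M,
      |f a - f b| ≤ ε + K * ∑ i : Fin n, ∑ z ∈ s, (g z (a i) - g z (b i)) ^ 2)
    (A B : α → Fin n → M) (hA : ∀ i, Measurable fun φ => A φ i)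
    (hB : ∀ i, Measurable fun φ => B φ i) :
    |∫ φ, f (A φ) ∂μ - ∫ φ, f (B φ) ∂μ|
      ≤ ε + K * ∑ i : Fin n, ∑ z ∈ s, ∫ φ, (g z (A φ i) - g z (B φ i)) ^ 2 ∂μ := by
  have hAm : Measurable A := measurable_pi_lambda _ hA
  have hBm : Measurable B := measurable_pi_lambda _ hB
  have hfA : Integrable (fun φ => f (A φ)) μ := integrable_comp hf hAm
  have hfB : Integrable (fun φ => f (B φ)) μ := integrable_comp hf hBm
  have hgint : ∀ (i : Fin n) (z : ι),
      Integrable (fun φ => (g z (A φ i) - g z (B φ i)) ^ 2) μ := by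
    intro i z
    have hcont : Continuous fun p : M × M => (g z p.1 - g z p.2) ^ 2 := by fun_prop
    exact integrable_comp (X := M × M) hcont ((hA i).prodMk (hB i))
  have hsum : Integrable
      (fun φ => ε + K * ∑ i : Fin n, ∑ z ∈ s, (g z (A φ i) - g z (B φ i)) ^ 2) μ := by
    refine (integrable_const ε).add (Integrable.const_mul ?_ K)
    exact integrable_finset_sum _ fun i _ => integrable_finset_sum _ fun z _ => hgint i z
  calc |∫ φ, f (A φ) ∂μ - ∫ φ, f (B φ) ∂μ|
      = |∫ φ, (f (A φ) - f (B φ)) ∂μ| := by rw [integral_sub hfA hfB]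
    _ ≤ ∫ φ, |f (A φ) - f (B φ)| ∂μ := by
        simpa [Real.norm_eq_abs] using norm_integral_le_integral_norm fun φ => f (A φ) - f (B φ)
    _ ≤ ∫ φ, (ε + K * ∑ i : Fin n, ∑ z ∈ s, (g z (A φ i) - g z (B φ i)) ^ 2) ∂μ := by
        refine integral_mono ((hfA.sub hfB).abs) hsum fun φ => hdom _ _
    _ = ε + K * ∑ i : Fin n, ∑ z ∈ s, ∫ φ, (g z (A φ i) - g z (B φ i)) ^ 2 ∂μ := by
        rw [integral_add (integrable_const ε) (Integrable.const_mul _ K), integral_const,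
          integral_const_mul]
        · simp only [probReal_univ, measure_univ, ENNReal.toReal_one, smul_eq_mul, one_mul]
          congr 1
          congr 1
          rw [integral_finset_sum _ fun i _ => integrable_finset_sum _ fun z _ => hgint i z]
          exact Finset.sum_congr rfl fun i _ =>
            integral_finset_sum _ fun z _ => hgint i z
        · exact integrable_finset_sum _ fun i _ => integrable_finset_sum _ fun z _ => hgint i z

end Est


lemma exists_pos_le_finset {β : Type*} [LinearOrder β] {e : β} {zero : β} (he : zero < e)
    {α : Type*} (s : Finset α) (δ : α → β) (h : ∀ z ∈ s, zero < δ z) :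
    ∃ ε, zero < ε ∧ (∀ z ∈ s, ε ≤ δ z) := by
  classical
  induction s using Finset.induction with
  | empty => exact ⟨e, he, by simp⟩
  | @insert a s ha ih =>
    obtain ⟨ε, hε, hle⟩ := ih fun z hz => h z (Finset.mem_insert_of_mem hz)
    refine ⟨min ε (δ a), lt_min hε (h a (Finset.mem_insert_self a s)), fun z hz => ?_⟩
    rcases Finset.mem_insert.1 hz with rfl | hz
    · exact min_le_right _ _
    · exact le_trans (min_le_left _ _) (hle z hz)

section Dom
variable {M : Type*} [MetricSpace M] [CompactSpace M]

lemma dom {n : ℕ} {f : (Fin n → M) → ℝ} (hf : Continuous f) {ε : ℝ} (hε : 0 < ε) :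
    ∃ (s : Finset M) (K : ℝ), 0 ≤ K ∧ ∀ a b : Fin n → M,
      |f a - f b| ≤ ε + K * ∑ i : Fin n, ∑ z ∈ s, (dist (a i) z - dist (b i) z) ^ 2 := by
  obtain ⟨C, hC0, hC⟩ := exists_bound hf
  obtain ⟨η, hη, hu⟩ := Metric.uniformContinuous_iff.1
    (CompactSpace.uniformContinuous_of_continuous hf) ε hε
  obtain ⟨t, -, htfin, hcov⟩ := finite_cover_balls_of_compact (isCompact_univ (X := M))
    (by positivity : (0:ℝ) < η / 3)
  refine ⟨htfin.toFinset, 18 * (C + 1) / η ^ 2, by positivity, fun a b => ?_⟩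
  have hsum_nonneg : (0:ℝ) ≤ ∑ i : Fin n, ∑ z ∈ htfin.toFinset, (dist (a i) z - dist (b i) z) ^ 2 :=
    Finset.sum_nonneg fun i _ => Finset.sum_nonneg fun z _ => sq_nonneg _
  by_cases hcase : ∀ i, dist (a i) (b i) < η
  · have : dist a b < η := by
      rcases n with - | m
      · simpa [dist_pi_lt_iff hη] using hcase
      · exact (dist_pi_lt_iff hη).2 hcase
    have := hu this
    rw [Real.dist_eq] at this
    nlinarith [mul_nonneg (by positivity : (0:ℝ) ≤ 18 * (C + 1) / η ^ 2) hsum_nonneg]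
  · push_neg at hcase
    obtain ⟨i, hi⟩ := hcase
    obtain ⟨z, hz, haz⟩ : ∃ z ∈ htfin.toFinset, dist (a i) z < η / 3 := by
      have := hcov (Set.mem_univ (a i))
      simp only [Set.mem_iUnion, Metric.mem_ball] at this
      obtain ⟨z, hz, hd⟩ := this
      exact ⟨z, htfin.mem_toFinset.2 hz, hd⟩
    have key : η / 3 ≤ |dist (a i) z - dist (b i) z| := by
      have h1 : dist (a i) (b i) ≤ dist (a i) z + dist z (b i) := dist_triangle _ _ _
      rw [abs_sub_comm, le_abs]
      left
      have : dist z (b i) = dist (b i) z := dist_comm _ _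
      linarith
    have key2 : (η / 3) ^ 2 ≤ (dist (a i) z - dist (b i) z) ^ 2 := by
      rw [← sq_abs (dist (a i) z - dist (b i) z)]
      exact pow_le_pow_left₀ (by positivity) key 2
    have h3 : (η / 3) ^ 2 ≤ ∑ z' ∈ htfin.toFinset, (dist (a i) z' - dist (b i) z') ^ 2 :=
      le_trans key2 (Finset.single_le_sum (f := fun z' => (dist (a i) z' - dist (b i) z') ^ 2) (fun z' _ => sq_nonneg _) hz)
    have h4 : (η / 3) ^ 2 ≤ ∑ i' : Fin n, ∑ z' ∈ htfin.toFinset, (dist (a i') z' - dist (b i') z') ^ 2 :=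
      le_trans h3 (Finset.single_le_sum (f := fun i' => ∑ z' ∈ htfin.toFinset, (dist (a i') z' - dist (b i') z') ^ 2)
        (fun i' _ => Finset.sum_nonneg fun z' _ => sq_nonneg _) (Finset.mem_univ i))
    have habs : |f a - f b| ≤ 2 * C := by
      calc |f a - f b| ≤ |f a| + |f b| := abs_sub _ _
        _ ≤ 2 * C := by linarith [hC a, hC b]
    have hKbound : 2 * (C + 1) ≤ 18 * (C + 1) / η ^ 2 *
        ∑ i' : Fin n, ∑ z' ∈ htfin.toFinset, (dist (a i') z' - dist (b i') z') ^ 2 := by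
      rw [div_mul_eq_mul_div, le_div_iff₀ (by positivity)]
      nlinarith
    linarith

end Dom


lemma aux_div (c ε : ℝ) (hc : 0 ≤ c) (hε : 0 < ε) : c * (ε / (c + 1)) < ε := by
  have h1 : c / (c + 1) < 1 := (div_lt_one (by linarith)).2 (by linarith)
  calc c * (ε / (c + 1)) = ε * (c / (c + 1)) := by ring
    _ < ε * 1 := mul_lt_mul_of_pos_left h1 hε
    _ = ε := mul_one ε


/-- If `(Q_t)` is a Feller convolution semigroup on the space `(F,𝓕)` of measurable
self-maps of a compact metric space `M`, then the operators
`P_t^{(n)} f(x) = ∫ f ∘ φ^{⊗n}(x) Q_t(dφ)` form a compatible family of Feller semigroups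
(Markovian, mapping continuous functions to continuous functions, strongly continuous at
`t = 0`, with the semigroup and compatibility properties), and they satisfy
`P_t^{(2)} (f ⊗ f)(x,x) = P_t (f²)(x)`. -/
theorem stmt2 {M : Type*} [MetricSpace M] [CompactSpace M]
    [MeasurableSpace M] [BorelSpace M]
    (Q : ℝ≥0 → Measure (FF M)) (hQprob : ∀ t, IsProbabilityMeasure (Q t))
    (J : ℝ≥0 → FF M → FF M)
    (hJmeas : ∀ s, Measurable (J s))
    (hJjoint : ∀ s, Measurable fun p : M × FF M => (J s p.2).1 p.1)
    (hJpres : ∀ s, ∀ x : M, ∀ᵐ φ ∂Q s, (J s φ).1 x = φ.1 x)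
    (hconv : ∀ s t : ℝ≥0,
      Q (s + t) = Measure.map (fun p : FF M × FF M => FF.comp (J s p.1) p.2)
        ((Q s).prod (Q t)))
    (hFeller₁ : ∀ f : C(M, ℝ), ∀ ε > (0 : ℝ), ∃ δ > (0 : ℝ≥0), ∀ t < δ, ∀ x : M,
      ∫ φ : FF M, (f (φ.1 x) - f x) ^ 2 ∂ Q t < ε)
    (hFeller₂ : ∀ (f : C(M, ℝ)) (t : ℝ≥0), ∀ ε > (0 : ℝ), ∃ δ > (0 : ℝ), ∀ x y : M,
      dist x y < δ → ∫ φ : FF M, (f (φ.1 x) - f (φ.1 y)) ^ 2 ∂ Q t < ε) :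
    -- Markovian
    (∀ (n : ℕ) (t : ℝ≥0) (f : (Fin n → M) → ℝ) (x : Fin n → M),
      (∀ y, 0 ≤ f y) → 0 ≤ Pn Q n t f x) ∧
    (∀ (n : ℕ) (t : ℝ≥0) (x : Fin n → M), Pn Q n t (fun _ => 1) x = 1) ∧
    -- Feller: continuity in space
    (∀ (n : ℕ) (t : ℝ≥0) (f : (Fin n → M) → ℝ), Continuous f →
      Continuous fun x => Pn Q n t f x) ∧
    -- Feller: strong continuity at t = 0
    (∀ (n : ℕ) (f : (Fin n → M) → ℝ), Continuous f → ∀ x,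
      Tendsto (fun t : ℝ≥0 => Pn Q n t f x) (nhds 0) (nhds (f x))) ∧
    -- semigroup property
    (∀ (n : ℕ) (s t : ℝ≥0) (f : (Fin n → M) → ℝ), Continuous f → ∀ x,
      Pn Q n (s + t) f x = Pn Q n s (fun y => Pn Q n t f y) x) ∧
    -- compatibility
    (∀ (k n : ℕ) (ι : Fin k → Fin n) (t : ℝ≥0) (f : (Fin k → M) → ℝ) (x : Fin n → M),
      Pn Q n t (fun y => f (y ∘ ι)) x = Pn Q k t f (x ∘ ι)) ∧
    -- the identity P_t^{(2)}(f ⊗ f)(x,x) = P_t(f²)(x)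
    (∀ (f : C(M, ℝ)) (t : ℝ≥0) (x : M),
      Pn Q 2 t (fun y => f (y 0) * f (y 1)) ![x, x]
        = Pn Q 1 t (fun y => f (y 0) ^ 2) (fun _ => x)) := by
  have gc : M → C(M, ℝ) := fun z => ⟨fun m => dist m z, by fun_prop⟩
  refine ⟨?_, ?_, ?_, ?_, ?_, ?_, ?_⟩
  · -- positivity
    intro n t f x hfpos
    exact integral_nonneg fun φ => hfpos _
  · -- constant 1
    intro n t x
    haveI := hQprob t
    simp [Pn, integral_const]
  · -- continuity in space
    intro n t f hf
    haveI := hQprob t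
    rw [Metric.continuous_iff]
    intro x ε hε
    have hε3 : (0:ℝ) < ε / 3 := by positivity
    obtain ⟨s, K, hK, hdom⟩ := dom hf hε3
    set ε'' : ℝ := (ε / 3) / (K * (n * s.card) + 1) with hε''def
    have hε''pos : 0 < ε'' := by positivity
    choose δf hδfpos hδf using fun z : M =>
      hFeller₂ ⟨fun m => dist m z, by fun_prop⟩ t ε'' hε''pos
    obtain ⟨δ, hδpos, hδle⟩ := exists_pos_le_finset (zero := (0:ℝ)) one_pos s δf
      (fun z _ => hδfpos z)
    refine ⟨δ, hδpos, fun y hxy => ?_⟩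
    have hterm : ∀ i : Fin n, ∀ z ∈ s,
        ∫ φ : FF M, (dist (φ.1 (y i)) z - dist (φ.1 (x i)) z) ^ 2 ∂Q t < ε'' := by
      intro i z hz
      have : dist (y i) (x i) < δf z :=
        lt_of_le_of_lt (dist_le_pi_dist y x i) (lt_of_lt_of_le hxy (hδle z hz))
      exact hδf z (y i) (x i) this
    have hest := est (Q t) hf s (fun z m => dist m z) (fun z => by fun_prop) hK hdom
      (fun φ i => φ.1 (y i)) (fun φ i => φ.1 (x i))
      (fun i => FF.measurable_eval (y i)) (fun i => FF.measurable_eval (x i))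
    have hsum : ∑ i : Fin n, ∑ z ∈ s,
        ∫ φ : FF M, (dist (φ.1 (y i)) z - dist (φ.1 (x i)) z) ^ 2 ∂Q t
        ≤ (n * s.card) * ε'' := by
      calc ∑ i : Fin n, ∑ z ∈ s, ∫ φ : FF M, (dist (φ.1 (y i)) z - dist (φ.1 (x i)) z) ^ 2 ∂Q t
          ≤ ∑ _i : Fin n, (s.card * ε'') := by
            refine Finset.sum_le_sum fun i _ => ?_
            calc ∑ z ∈ s, ∫ φ : FF M, (dist (φ.1 (y i)) z - dist (φ.1 (x i)) z) ^ 2 ∂Q t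
                ≤ ∑ _z ∈ s, ε'' := Finset.sum_le_sum fun z hz => (hterm i z hz).le
              _ = s.card * ε'' := by rw [Finset.sum_const, nsmul_eq_mul]
        _ = (n * s.card) * ε'' := by
            rw [Finset.sum_const, Finset.card_univ, Fintype.card_fin, nsmul_eq_mul]; ring
    have hKs : K * ((n * s.card) * ε'') < ε / 3 := by
      have hc : (0:ℝ) ≤ K * (n * s.card) :=
        mul_nonneg hK (by positivity)
      calc K * ((n * s.card) * ε'') = (K * (n * s.card)) * ε'' := by ring
        _ < ε / 3 := by rw [hε''def]; exact aux_div _ _ hc hε3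
    rw [Real.dist_eq]
    calc |Pn Q n t f y - Pn Q n t f x|
        ≤ ε / 3 + K * ∑ i : Fin n, ∑ z ∈ s,
            ∫ φ : FF M, (dist (φ.1 (y i)) z - dist (φ.1 (x i)) z) ^ 2 ∂Q t := hest
      _ ≤ ε / 3 + K * ((n * s.card) * ε'') := by
          have := mul_le_mul_of_nonneg_left hsum hK
          linarith
      _ < ε := by linarith
  · -- strong continuity at t = 0
    intro n f hf x
    rw [Metric.tendsto_nhds]
    intro ε hε
    have hε3 : (0:ℝ) < ε / 3 := by positivity
    obtain ⟨s, K, hK, hdom⟩ := dom hf hε3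
    set ε'' : ℝ := (ε / 3) / (K * (n * s.card) + 1) with hε''def
    have hε''pos : 0 < ε'' := by positivity
    choose δf hδfpos hδf using fun z : M =>
      hFeller₁ ⟨fun m => dist m z, by fun_prop⟩ ε'' hε''pos
    obtain ⟨δ, hδpos, hδle⟩ := exists_pos_le_finset (zero := (0:ℝ≥0)) one_pos s δf
      (fun z _ => hδfpos z)
    filter_upwards [Iio_mem_nhds hδpos] with t ht
    haveI := hQprob t
    have hterm : ∀ i : Fin n, ∀ z ∈ s,
        ∫ φ : FF M, (dist (φ.1 (x i)) z - dist (x i) z) ^ 2 ∂Q t < ε'' := by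
      intro i z hz
      exact hδf z t (lt_of_lt_of_le ht (hδle z hz)) (x i)
    have hest := est (Q t) hf s (fun z m => dist m z) (fun z => by fun_prop) hK hdom
      (fun φ i => φ.1 (x i)) (fun _ => x)
      (fun i => FF.measurable_eval (x i)) (fun i => measurable_const)
    have hBconst : ∫ φ : FF M, f ((fun _ : FF M => x) φ) ∂Q t = f x := by
      simp [integral_const]
    rw [hBconst] at hest
    have hsum : ∑ i : Fin n, ∑ z ∈ s,
        ∫ φ : FF M, (dist (φ.1 (x i)) z - dist (x i) z) ^ 2 ∂Q t
        ≤ (n * s.card) * ε'' := by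
      calc ∑ i : Fin n, ∑ z ∈ s, ∫ φ : FF M, (dist (φ.1 (x i)) z - dist (x i) z) ^ 2 ∂Q t
          ≤ ∑ _i : Fin n, (s.card * ε'') := by
            refine Finset.sum_le_sum fun i _ => ?_
            calc ∑ z ∈ s, ∫ φ : FF M, (dist (φ.1 (x i)) z - dist (x i) z) ^ 2 ∂Q t
                ≤ ∑ _z ∈ s, ε'' := Finset.sum_le_sum fun z hz => (hterm i z hz).le
              _ = s.card * ε'' := by rw [Finset.sum_const, nsmul_eq_mul]
        _ = (n * s.card) * ε'' := by
            rw [Finset.sum_const, Finset.card_univ, Fintype.card_fin, nsmul_eq_mul]; ring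
    have hKs : K * ((n * s.card) * ε'') < ε / 3 := by
      have hc : (0:ℝ) ≤ K * (n * s.card) :=
        mul_nonneg hK (by positivity)
      calc K * ((n * s.card) * ε'') = (K * (n * s.card)) * ε'' := by ring
        _ < ε / 3 := by rw [hε''def]; exact aux_div _ _ hc hε3
    rw [Real.dist_eq]
    calc |Pn Q n t f x - f x|
        ≤ ε / 3 + K * ∑ i : Fin n, ∑ z ∈ s,
            ∫ φ : FF M, (dist (φ.1 (x i)) z - dist (x i) z) ^ 2 ∂Q t := hest
      _ ≤ ε / 3 + K * ((n * s.card) * ε'') := by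
          have := mul_le_mul_of_nonneg_left hsum hK
          linarith
      _ < ε := by linarith
  · -- semigroup property
    intro n s t f hf x
    haveI := hQprob s
    haveI := hQprob t
    have hcomp : Measurable (fun p : FF M × FF M => FF.comp (J t p.1) p.2) := by
      refine measurable_toFF fun m => ?_
      show Measurable fun p : FF M × FF M => (J t p.1).1 (p.2.1 m)
      exact (hJjoint t).comp (((FF.measurable_eval m).comp measurable_snd).prodMk
        measurable_fst)
    have hgmeas : Measurable fun ψ : FF M => f (fun i => ψ.1 (x i)) :=
      hf.measurable.comp (measurable_pi_lambda _ fun i => FF.measurable_eval (x i))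
    have hAi : ∀ i : Fin n, Measurable fun p : FF M × FF M => (J t p.1).1 (p.2.1 (x i)) :=
      fun i => (hJjoint t).comp ((((FF.measurable_eval (x i)).comp measurable_snd)).prodMk
        measurable_fst)
    have hint : Integrable (fun p : FF M × FF M => f (fun i => (J t p.1).1 (p.2.1 (x i))))
        ((Q t).prod (Q s)) :=
      integrable_comp hf (measurable_pi_lambda _ hAi)
    have key : Q (s + t) = Measure.map (fun p : FF M × FF M => FF.comp (J t p.1) p.2)
        ((Q t).prod (Q s)) := by rw [add_comm]; exact hconv t s
    show (∫ ψ : FF M, f (fun i => ψ.1 (x i)) ∂Q (s + t)) = _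
    rw [key, integral_map hcomp.aemeasurable hgmeas.aestronglyMeasurable]
    have step : (∫ p : FF M × FF M, f (fun i => (FF.comp (J t p.1) p.2).1 (x i))
        ∂(Q t).prod (Q s))
        = ∫ φ₂ : FF M, ∫ φ₁ : FF M, f (fun i => (J t φ₁).1 (φ₂.1 (x i))) ∂Q t ∂Q s :=
      integral_prod_symm _ hint
    rw [step]
    refine integral_congr_ae (Filter.Eventually.of_forall fun φ₂ => ?_)
    refine integral_congr_ae ?_
    have hae : ∀ᵐ φ₁ ∂Q t, ∀ i : Fin n, (J t φ₁).1 (φ₂.1 (x i)) = φ₁.1 (φ₂.1 (x i)) :=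
      ae_all_iff.2 fun i => hJpres t (φ₂.1 (x i))
    filter_upwards [hae] with φ₁ h1
    congr 1
    funext i
    exact h1 i
  · -- compatibility
    intro k n ι t f x
    rfl
  · -- the identity
    intro f t x
    simp only [Pn]
    refine integral_congr_ae (Filter.Eventually.of_forall fun φ => ?_)
    simp [sq]
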